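/- Let φ : [0,∞) → (0,1] with φ = 1 on [0,1], φ ∈ C²(1,∞), satisfying: (a) φ(a) ≤ c₁ φ(b) whenever |a-b| ≤ 1, and (b) max(|φ'(a)|, |φ''(a)|) ≤ c₂ φ(a) for a > 1. Let η(z) = φ(|z-x|)|z-x|^{-α-d}. Then there is a constant C (depending on c₁, c₂, α, d) such that for all y with |y - x| > 2, the first and second partial derivatives of η on B(y,1) are bounded in absolute value by C η(y). -/

import Mathlib

open Metric

private lemma aux1 (A B r : ℝ) (hr : 1 < r) (hB : |B| ≤ r) :
    |A * (1 / (2 * r)) * (2 * B)| ≤ |A| := by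
  have hr0 : 0 < r := by linarith
  have hid : A * (1 / (2 * r)) * (2 * B) = A * B / r := by field_simp
  rw [hid, abs_div, abs_of_pos hr0, div_le_iff₀ hr0, abs_mul]
  exact mul_le_mul_of_nonneg_left hB (abs_nonneg A)

private lemma aux2 (A1 A2 B1 B2 B3 r : ℝ) (hr : 1 < r) (h1 : |B1| ≤ 1)
    (h2 : |B2| ≤ r) (h3 : |B3| ≤ r) :
    |A1 * (1 / (2 * r)) * (2 * B1) +
      2 * B2 * ((A2 * (1 / (2 * r)) * (1 / (2 * r)) +
        A1 * (-(2 * (1 / (2 * r))) / (2 * r) ^ 2)) * (2 * B3))| ≤ 2 * |A1| + |A2| := by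
  have hr0 : 0 < r := by linarith
  have hid : A1 * (1 / (2 * r)) * (2 * B1) +
      2 * B2 * ((A2 * (1 / (2 * r)) * (1 / (2 * r)) +
        A1 * (-(2 * (1 / (2 * r))) / (2 * r) ^ 2)) * (2 * B3)) =
      (A1 * B1 * r ^ 2 + A2 * B2 * B3 * r - A1 * B2 * B3) / r ^ 3 := by
    field_simp; ring
  rw [hid, abs_div, abs_of_pos (pow_pos hr0 3), div_le_iff₀ (pow_pos hr0 3)]
  have t1 : |A1 * B1 * r ^ 2| ≤ |A1| * r ^ 2 := by
    rw [abs_mul, abs_mul, abs_of_pos (pow_pos hr0 2)]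
    have h : |A1| * |B1| ≤ |A1| * 1 := mul_le_mul_of_nonneg_left h1 (abs_nonneg _)
    nlinarith [abs_nonneg A1, sq_nonneg r, pow_pos hr0 2]
  have t2 : |A2 * B2 * B3 * r| ≤ |A2| * r ^ 3 := by
    rw [abs_mul, abs_mul, abs_mul, abs_of_pos hr0]
    calc |A2| * |B2| * |B3| * r ≤ |A2| * r * r * r := by gcongr
      _ = |A2| * r ^ 3 := by ring
  have t3 : |A1 * B2 * B3| ≤ |A1| * r ^ 2 := by
    rw [abs_mul, abs_mul]
    calc |A1| * |B2| * |B3| ≤ |A1| * r * r := by gcongr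
      _ = |A1| * r ^ 2 := by ring
  have hr23 : r ^ 2 ≤ r ^ 3 := by nlinarith
  have habs : |A1 * B1 * r ^ 2 + A2 * B2 * B3 * r - A1 * B2 * B3| ≤
      |A1 * B1 * r ^ 2| + |A2 * B2 * B3 * r| + |A1 * B2 * B3| := by
    calc _ ≤ |A1 * B1 * r ^ 2 + A2 * B2 * B3 * r| + |A1 * B2 * B3| := abs_sub _ _
      _ ≤ _ := by have := abs_add_le (A1 * B1 * r ^ 2) (A2 * B2 * B3 * r); linarith
  have m1 : |A1| * r ^ 2 ≤ |A1| * r ^ 3 := mul_le_mul_of_nonneg_left hr23 (abs_nonneg _)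
  nlinarith [abs_nonneg A1, abs_nonneg A2]

set_option maxHeartbeats 1000000 in
theorem stmt_13 (d : ℕ) (hd : 1 ≤ d) (α : ℝ) (hα : 0 < α) (hα2 : α < 2)
    (φ : ℝ → ℝ) (c₁ c₂ : ℝ) (hc₁ : 0 < c₁) (hc₂ : 0 < c₂)
    (hφpos : ∀ s, 0 ≤ s → 0 < φ s) (hφle : ∀ s, 0 ≤ s → φ s ≤ 1)
    (hφ1 : ∀ s, 0 ≤ s → s ≤ 1 → φ s = 1)
    (hφC2 : ContDiffOn ℝ 2 φ (Set.Ioi (1 : ℝ)))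
    (hφa : ∀ a b : ℝ, 0 ≤ a → 0 ≤ b → |a - b| ≤ 1 → φ a ≤ c₁ * φ b)
    (hφb : ∀ a : ℝ, 1 < a → max |deriv φ a| |deriv (deriv φ) a| ≤ c₂ * φ a)
    (x : EuclideanSpace ℝ (Fin d))
    (η : EuclideanSpace ℝ (Fin d) → ℝ)
    (hη : ∀ z, η z = φ ‖z - x‖ * ‖z - x‖ ^ (-α - d)) :
    ∃ C : ℝ, 0 < C ∧ ∀ y : EuclideanSpace ℝ (Fin d), dist y x > 2 →
      ∀ z ∈ ball y 1, ∀ j k : Fin d,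
        |fderiv ℝ η z (EuclideanSpace.single j (1:ℝ))| ≤ C * η y ∧
        |fderiv ℝ (fun w => fderiv ℝ η w (EuclideanSpace.single j (1:ℝ))) z
            (EuclideanSpace.single k (1:ℝ))| ≤ C * η y := by
  have hd1 : (1:ℝ) ≤ d := by exact_mod_cast hd
  set e : ℝ := -α - d with he
  have hee : e < 0 := by simp only [he]; linarith
  have habse : |e| = α + d := by rw [abs_of_neg hee]; simp only [he]; ring
  -- derivatives of φ
  have hopen : IsOpen (Set.Ioi (1:ℝ)) := isOpen_Ioi
  have hφd1 : ∀ s : ℝ, 1 < s → HasDerivAt φ (deriv φ s) s := by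
    intro s hs
    have h1 : DifferentiableOn ℝ φ (Set.Ioi 1) := hφC2.differentiableOn (by norm_num)
    exact ((h1 s hs).differentiableAt (hopen.mem_nhds hs)).hasDerivAt
  have hφd2 : ∀ s : ℝ, 1 < s → HasDerivAt (deriv φ) (deriv (deriv φ) s) s := by
    intro s hs
    have h2 : ContDiffOn ℝ 1 (deriv φ) (Set.Ioi 1) := hφC2.deriv_of_isOpen hopen (by norm_num)
    exact (((h2.differentiableOn (by norm_num)) s hs).differentiableAt
      (hopen.mem_nhds hs)).hasDerivAt
  -- f and its derivatives
  set f : ℝ → ℝ := fun s => φ s * s ^ e with hfdef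
  set f₁ : ℝ → ℝ := fun s => deriv φ s * s ^ e + φ s * (e * s ^ (e - 1)) with hf1def
  set f₂ : ℝ → ℝ := fun s =>
    (deriv (deriv φ) s * s ^ e + deriv φ s * (e * s ^ (e - 1))) +
    (deriv φ s * (e * s ^ (e - 1)) + φ s * (e * ((e - 1) * s ^ (e - 1 - 1)))) with hf2def
  have hs0 : ∀ s : ℝ, 1 < s → (s ≠ 0) := fun s hs => by positivity
  have hrp : ∀ s : ℝ, 1 < s → HasDerivAt (fun s : ℝ => s ^ e) (e * s ^ (e - 1)) s :=
    fun s hs => Real.hasDerivAt_rpow_const (Or.inl (hs0 s hs))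
  have hdf : ∀ s : ℝ, 1 < s → HasDerivAt f (f₁ s) s := fun s hs =>
    (hφd1 s hs).mul (hrp s hs)
  have hdf1 : ∀ s : ℝ, 1 < s → HasDerivAt f₁ (f₂ s) s := by
    intro s hs
    have h1 : HasDerivAt (fun s : ℝ => e * s ^ (e - 1)) (e * ((e - 1) * s ^ (e - 1 - 1))) s :=
      (Real.hasDerivAt_rpow_const (p := e - 1) (Or.inl (hs0 s hs))).const_mul e
    exact ((hφd2 s hs).mul (hrp s hs)).add ((hφd1 s hs).mul h1)
  -- bounds on f₁ f₂
  set K₁ : ℝ := c₂ + (α + d) with hK1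
  set K₂ : ℝ := c₂ + 2 * ((α + d) * c₂) + (α + d) * ((α + d) + 1) with hK2
  have hbound : ∀ s : ℝ, 1 < s →
      |f₁ s| ≤ K₁ * (φ s * s ^ e) ∧ |f₂ s| ≤ K₂ * (φ s * s ^ e) := by
    intro s hs
    have hsp : (0:ℝ) < s := by linarith
    have hφs : 0 < φ s := hφpos s hsp.le
    have hsd : 0 < s ^ e := Real.rpow_pos_of_pos hsp e
    have hsd1 : 0 < s ^ (e - 1) := Real.rpow_pos_of_pos hsp _
    have hsd2 : 0 < s ^ (e - 1 - 1) := Real.rpow_pos_of_pos hsp _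
    have hpow1 : s ^ (e - 1) ≤ s ^ e := Real.rpow_le_rpow_of_exponent_le hs.le (by linarith)
    have hpow2 : s ^ (e - 1 - 1) ≤ s ^ e := Real.rpow_le_rpow_of_exponent_le hs.le (by linarith)
    have h1 : |deriv φ s| ≤ c₂ * φ s := le_trans (le_max_left _ _) (hφb s hs)
    have h2 : |deriv (deriv φ) s| ≤ c₂ * φ s := le_trans (le_max_right _ _) (hφb s hs)
    have hαd : 0 < α + d := by linarith
    have habse1 : |e - 1| = (α + d) + 1 := by
      rw [abs_of_neg (by linarith : e - 1 < 0)]; simp only [he]; ring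
    constructor
    · calc |f₁ s| ≤ |deriv φ s * s ^ e| + |φ s * (e * s ^ (e - 1))| := abs_add_le _ _
        _ = |deriv φ s| * s ^ e + φ s * ((α + d) * s ^ (e - 1)) := by
            rw [abs_mul, abs_mul, abs_mul, abs_of_pos hsd, abs_of_pos hφs,
              habse, abs_of_pos hsd1]
        _ ≤ (c₂ * φ s) * s ^ e + φ s * ((α + d) * s ^ e) := by gcongr
        _ = K₁ * (φ s * s ^ e) := by rw [hK1]; ring
    · calc |f₂ s| ≤ |deriv (deriv φ) s * s ^ e + deriv φ s * (e * s ^ (e - 1))| +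
            |deriv φ s * (e * s ^ (e - 1)) + φ s * (e * ((e - 1) * s ^ (e - 1 - 1)))| :=
            abs_add_le _ _
        _ ≤ (|deriv (deriv φ) s * s ^ e| + |deriv φ s * (e * s ^ (e - 1))|) +
            (|deriv φ s * (e * s ^ (e - 1))| + |φ s * (e * ((e - 1) * s ^ (e - 1 - 1)))|) := by
            have := abs_add_le (deriv (deriv φ) s * s ^ e) (deriv φ s * (e * s ^ (e - 1)))
            have := abs_add_le (deriv φ s * (e * s ^ (e - 1)))
              (φ s * (e * ((e - 1) * s ^ (e - 1 - 1))))
            linarith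
        _ = |deriv (deriv φ) s| * s ^ e + |deriv φ s| * ((α + d) * s ^ (e - 1)) +
            (|deriv φ s| * ((α + d) * s ^ (e - 1)) +
              φ s * ((α + d) * (((α + d) + 1) * s ^ (e - 1 - 1)))) := by
            simp only [abs_mul]
            rw [abs_of_pos hsd, abs_of_pos hsd1, abs_of_pos hsd2, abs_of_pos hφs,
              habse, habse1]
        _ ≤ (c₂ * φ s) * s ^ e + (c₂ * φ s) * ((α + d) * s ^ e) +
            ((c₂ * φ s) * ((α + d) * s ^ e) + φ s * ((α + d) * (((α + d) + 1) * s ^ e))) := by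
            gcongr
        _ = K₂ * (φ s * s ^ e) := by rw [hK2]; ring
  -- rewrite η
  set F : EuclideanSpace ℝ (Fin d) → ℝ := fun w => f (Real.sqrt (‖w - x‖ ^ 2)) with hFdef
  have hEq : η = F := by
    funext w
    rw [hη w, hFdef]
    simp only [Real.sqrt_sq (norm_nonneg _), hfdef]
  rw [hEq]
  -- g chain rule data
  have hsq : ∀ t : ℝ, 1 < t → 1 < Real.sqrt t := by
    intro t ht
    rw [show (1:ℝ) = Real.sqrt 1 by simp]
    exact Real.sqrt_lt_sqrt (by norm_num) ht
  set g₁ : ℝ → ℝ := fun t => f₁ (Real.sqrt t) * (1 / (2 * Real.sqrt t)) with hg1def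
  set g₂ : ℝ → ℝ := fun t =>
    f₂ (Real.sqrt t) * (1 / (2 * Real.sqrt t)) * (1 / (2 * Real.sqrt t)) +
      f₁ (Real.sqrt t) * (-(2 * (1 / (2 * Real.sqrt t))) / (2 * Real.sqrt t) ^ 2) with hg2def
  have hg : ∀ t : ℝ, 1 < t → HasDerivAt (fun t => f (Real.sqrt t)) (g₁ t) t := by
    intro t ht
    exact (hdf _ (hsq t ht)).comp t (Real.hasDerivAt_sqrt (by positivity))
  have hg1d : ∀ t : ℝ, 1 < t → HasDerivAt g₁ (g₂ t) t := by
    intro t ht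
    have hinv : HasDerivAt (fun t : ℝ => 1 / (2 * Real.sqrt t))
        (-(2 * (1 / (2 * Real.sqrt t))) / (2 * Real.sqrt t) ^ 2) t := by
      have h2 : HasDerivAt (fun t : ℝ => 2 * Real.sqrt t) (2 * (1 / (2 * Real.sqrt t))) t :=
        (Real.hasDerivAt_sqrt (by positivity)).const_mul 2
      have hne : 2 * Real.sqrt t ≠ 0 := by
        have := hsq t ht; positivity
      rw [show (fun t : ℝ => 1 / (2 * Real.sqrt t)) = (fun t => 2 * Real.sqrt t)⁻¹ from by
        funext s; simp [one_div]]
      exact h2.inv hne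
    exact ((hdf1 _ (hsq t ht)).comp t (Real.hasDerivAt_sqrt (by positivity))).mul hinv
  -- fderiv of F
  have hq : ∀ z : EuclideanSpace ℝ (Fin d),
      HasFDerivAt (fun w : EuclideanSpace ℝ (Fin d) => ‖w - x‖ ^ 2)
        (2 • (innerSL ℝ (z - x))) z := by
    intro z
    have := ((hasFDerivAt_id z).sub_const x).norm_sq
    simpa using this
  have hFd : ∀ z : EuclideanSpace ℝ (Fin d), 1 < ‖z - x‖ →
      HasFDerivAt F (g₁ (‖z - x‖ ^ 2) • (2 • (innerSL ℝ (z - x)))) z := by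
    intro z hz
    have ht : (1:ℝ) < ‖z - x‖ ^ 2 := by nlinarith
    exact (hg _ ht).comp_hasFDerivAt z (hq z)
  -- the region
  have hUopen : IsOpen {w : EuclideanSpace ℝ (Fin d) | 1 < ‖w - x‖} :=
    isOpen_lt continuous_const ((continuous_id.sub continuous_const).norm)
  -- the value of fderiv F applied to v
  have hfderivF : ∀ (z : EuclideanSpace ℝ (Fin d)), 1 < ‖z - x‖ →
      ∀ v : EuclideanSpace ℝ (Fin d),
      fderiv ℝ F z v = g₁ (‖z - x‖ ^ 2) * (2 * ((innerSL ℝ v) (z - x))) := by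
    intro z hz v
    rw [(hFd z hz).fderiv]
    simp only [ContinuousLinearMap.smul_apply, innerSL_apply_apply, smul_eq_mul]
    rw [real_inner_comm]
    ring
  -- main
  set K : ℝ := K₁ + (2 * K₁ + K₂) with hK
  have hK₁pos : 0 < K₁ := by simp only [hK1]; positivity
  have hK₂pos : 0 < K₂ := by simp only [hK2]; positivity
  have hKpos : 0 < K := by simp only [hK]; positivity
  refine ⟨K * (c₁ * 2 ^ (α + d)), by positivity, ?_⟩
  intro y hy z hz j k
  set v := EuclideanSpace.single j (1:ℝ) with hv
  set u := EuclideanSpace.single k (1:ℝ) with hu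
  have hvn : ‖v‖ = 1 := by simp [hv]
  have hun : ‖u‖ = 1 := by simp [hu]
  set r : ℝ := ‖z - x‖ with hr
  set R : ℝ := ‖y - x‖ with hR
  have hR2 : 2 < R := by rwa [hR, ← dist_eq_norm]
  have hzy : ‖z - y‖ < 1 := by
    rw [← dist_eq_norm]; exact mem_ball.mp hz
  have hrR : |r - R| ≤ 1 := by
    have := abs_norm_sub_norm_le (z - x) (y - x)
    rw [sub_sub_sub_cancel_right] at this
    exact le_trans this hzy.le
  have hr1 : 1 < r := by
    have := abs_le.mp hrR
    linarith [this.1]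
  have hrpos : (0:ℝ) < r := by linarith
  -- comparability : φ r * r ^ e ≤ c₁ * 2 ^ (α + d) * (φ R * R ^ e)
  have hcomp : φ r * r ^ e ≤ c₁ * 2 ^ (α + d) * (φ R * R ^ e) := by
    have hφcmp : φ r ≤ c₁ * φ R := hφa r R hrpos.le (by linarith) hrR
    have hrR2 : R / 2 ≤ r := by
      have := abs_le.mp hrR
      linarith [this.1]
    have hpow : r ^ e ≤ (R / 2) ^ e :=
      Real.rpow_le_rpow_of_nonpos (by linarith) hrR2 hee.le
    have hpow2 : (R / 2) ^ e = 2 ^ (α + d) * R ^ e := by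
      rw [Real.div_rpow (by linarith) (by norm_num)]
      rw [div_eq_mul_inv, ← Real.rpow_neg (by norm_num)]
      rw [show -e = α + d by simp only [he]; ring]
      ring
    have hRe : 0 < R ^ e := Real.rpow_pos_of_pos (by linarith) e
    have hφR : 0 < φ R := hφpos R (by linarith)
    have hφr : 0 < φ r := hφpos r hrpos.le
    calc φ r * r ^ e ≤ (c₁ * φ R) * (2 ^ (α + d) * R ^ e) := by
          rw [← hpow2]
          exact mul_le_mul hφcmp hpow (Real.rpow_pos_of_pos hrpos e).le (mul_nonneg hc₁.le hφR.le)
      _ = c₁ * 2 ^ (α + d) * (φ R * R ^ e) := by ring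
  have hFy : F y = φ R * R ^ e := by
    rw [hFdef]
    simp only [Real.sqrt_sq (norm_nonneg _), hfdef, hR]
  have hb := hbound r hr1
  have hsqr : Real.sqrt (r ^ 2) = r := Real.sqrt_sq hrpos.le
  -- first derivative bound
  have hfirst : |fderiv ℝ F z v| ≤ K * (c₁ * 2 ^ (α + d)) * F y := by
    rw [hfderivF z hr1 v]
    have hBv : |(innerSL ℝ v) (z - x)| ≤ r := by
      rw [innerSL_apply_apply]
      calc |inner ℝ v (z - x)| ≤ ‖v‖ * ‖z - x‖ := abs_real_inner_le_norm _ _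
        _ = r := by rw [hvn, one_mul]
    have := aux1 (f₁ r) ((innerSL ℝ v) (z - x)) r hr1 hBv
    rw [hg1def]
    simp only [← hr, hsqr]
    calc |f₁ r * (1 / (2 * r)) * (2 * ((innerSL ℝ v) (z - x)))| ≤ |f₁ r| := this
      _ ≤ K₁ * (φ r * r ^ e) := hb.1
      _ ≤ K * (φ r * r ^ e) := by
          have hP : 0 ≤ φ r * r ^ e := mul_nonneg (hφpos r hrpos.le).le (Real.rpow_pos_of_pos hrpos e).le
          apply mul_le_mul_of_nonneg_right _ hP
          simp only [hK]; linarith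
      _ ≤ K * (c₁ * 2 ^ (α + d) * (φ R * R ^ e)) :=
          mul_le_mul_of_nonneg_left hcomp hKpos.le
      _ = K * (c₁ * 2 ^ (α + d)) * F y := by rw [hFy]; ring
  -- second derivative bound
  have hsecond : |fderiv ℝ (fun w => fderiv ℝ F w v) z u| ≤ K * (c₁ * 2 ^ (α + d)) * F y := by
    set ψ : EuclideanSpace ℝ (Fin d) → ℝ :=
      fun w => g₁ (‖w - x‖ ^ 2) * (2 * ((innerSL ℝ v) (w - x))) with hψdef
    have hev : (fun w => fderiv ℝ F w v) =ᶠ[nhds z] ψ := by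
      filter_upwards [hUopen.mem_nhds (show z ∈ _ from hr1)] with w hw
      rw [hfderivF w hw v]
    have hA : HasFDerivAt (fun w : EuclideanSpace ℝ (Fin d) => g₁ (‖w - x‖ ^ 2))
        (g₂ (‖z - x‖ ^ 2) • (2 • (innerSL ℝ (z - x)))) z := by
      have ht : (1:ℝ) < ‖z - x‖ ^ 2 := by
        have h := hr1
        rw [hr] at h
        exact one_lt_pow₀ h (by norm_num)
      exact (hg1d _ ht).comp_hasFDerivAt z (hq z)
    have hB : HasFDerivAt (fun w : EuclideanSpace ℝ (Fin d) => 2 * ((innerSL ℝ v) (w - x)))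
        (2 • ((innerSL ℝ v).comp (ContinuousLinearMap.id ℝ _))) z := by
      have hcomp' := ((innerSL ℝ v).hasFDerivAt (x := z - x)).comp z
        ((hasFDerivAt_id z).sub_const x)
      have := hcomp'.const_mul (2:ℝ)
      refine this.congr_fderiv ?_
      ext w
      simp [two_smul]
    have hψd : HasFDerivAt ψ
        ((g₁ (‖z - x‖ ^ 2)) • (2 • ((innerSL ℝ v).comp (ContinuousLinearMap.id ℝ _))) +
          (2 * ((innerSL ℝ v) (z - x))) • (g₂ (‖z - x‖ ^ 2) • (2 • (innerSL ℝ (z - x))))) z :=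
      hA.mul hB
    rw [hev.fderiv_eq, hψd.fderiv]
    have hB1 : |(innerSL ℝ v) u| ≤ 1 := by
      rw [innerSL_apply_apply]
      calc |inner ℝ v u| ≤ ‖v‖ * ‖u‖ := abs_real_inner_le_norm _ _
        _ = 1 := by rw [hvn, hun, one_mul]
    have hB2 : |(innerSL ℝ v) (z - x)| ≤ r := by
      rw [innerSL_apply_apply]
      calc |inner ℝ v (z - x)| ≤ ‖v‖ * ‖z - x‖ := abs_real_inner_le_norm _ _
        _ = r := by rw [hvn, one_mul]
    have hB3 : |(innerSL ℝ (z - x)) u| ≤ r := by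
      rw [innerSL_apply_apply]
      calc |inner ℝ (z - x) u| ≤ ‖z - x‖ * ‖u‖ := abs_real_inner_le_norm _ _
        _ = r := by rw [hun, mul_one]
    have hval : ((g₁ (‖z - x‖ ^ 2)) • (2 • ((innerSL ℝ v).comp (ContinuousLinearMap.id ℝ _))) +
          (2 * ((innerSL ℝ v) (z - x))) • (g₂ (‖z - x‖ ^ 2) • (2 • (innerSL ℝ (z - x))))) u =
        f₁ r * (1 / (2 * r)) * (2 * ((innerSL ℝ v) u)) +
          2 * ((innerSL ℝ v) (z - x)) * ((f₂ r * (1 / (2 * r)) * (1 / (2 * r)) +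
            f₁ r * (-(2 * (1 / (2 * r))) / (2 * r) ^ 2)) * (2 * ((innerSL ℝ (z - x)) u))) := by
      simp only [ContinuousLinearMap.add_apply, ContinuousLinearMap.smul_apply,
        ContinuousLinearMap.coe_comp', Function.comp_apply, ContinuousLinearMap.coe_id',
        id_eq, smul_eq_mul, hg1def, hg2def, ← hr, hsqr]
      ring
    rw [hval]
    have := aux2 (f₁ r) (f₂ r) ((innerSL ℝ v) u) ((innerSL ℝ v) (z - x))
      ((innerSL ℝ (z - x)) u) r hr1 hB1 hB2 hB3
    calc _ ≤ 2 * |f₁ r| + |f₂ r| := this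
      _ ≤ 2 * (K₁ * (φ r * r ^ e)) + K₂ * (φ r * r ^ e) := by
          have := hb.1; have := hb.2; linarith
      _ ≤ K * (φ r * r ^ e) := by
          have hP : 0 ≤ φ r * r ^ e :=
            mul_nonneg (hφpos r hrpos.le).le (Real.rpow_pos_of_pos hrpos e).le
          have : (2 * K₁ + K₂) * (φ r * r ^ e) ≤ K * (φ r * r ^ e) := by
            apply mul_le_mul_of_nonneg_right _ hP
            simp only [hK]; linarith
          linarith
      _ ≤ K * (c₁ * 2 ^ (α + d) * (φ R * R ^ e)) :=
          mul_le_mul_of_nonneg_left hcomp hKpos.le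
      _ = K * (c₁ * 2 ^ (α + d)) * F y := by rw [hFy]; ring
  exact ⟨hfirst, hsecond⟩
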